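/- Let λ be a nonzero finite measure on a measurable space S and let U : S → ℝ be a bounded measurable function. Let m = essinf_λ U, and for ε > 0 set A_ε = {x ∈ S : U(x) ≤ m + ε} (so λ(A_ε) > 0 by definition of the essential infimum). Then for every ε > 0, the Gibbs measures μ_β(A) = (∫_A e^{−βU} dλ)/(∫_S e^{−βU} dλ) satisfy lim_{β→∞} μ_β(A_ε) = 1. -/

import Mathlib

open MeasureTheory Filter

/-- Concentration of Gibbs measures: for a nonzero finite measure `λ` and a bounded measurable
energy `U` with essential infimum `m`, the Gibbs measures
`μ_β(A) = (∫_A e^{−βU} dλ)/(∫ e^{−βU} dλ)` of the set `A_ε = {U ≤ m + ε}` tend to `1` as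
`β → ∞`, for every `ε > 0`. -/
theorem stmt10 {S : Type*} [MeasurableSpace S] (lam : Measure S) [IsFiniteMeasure lam]
    (hlam : lam ≠ 0) (U : S → ℝ) (hU : Measurable U) (M : ℝ) (hM : ∀ x, |U x| ≤ M)
    (ε : ℝ) (hε : 0 < ε) :
    Tendsto
      (fun β : ℝ =>
        (∫ x in {x | U x ≤ essInf U lam + ε}, Real.exp (-β * U x) ∂lam) /
          ∫ x, Real.exp (-β * U x) ∂lam)
      atTop (nhds 1) := by
  set m := essInf U lam with hm
  set A : Set S := {x | U x ≤ m + ε} with hA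
  set B : Set S := {x | U x ≤ m + ε / 2} with hB
  have hAmeas : MeasurableSet A := hU measurableSet_Iic
  have hBmeas : MeasurableSet B := hU measurableSet_Iic
  -- B has positive measure
  have hBdd : BddAbove {a : ℝ | lam {x | U x < a} = 0} := by
    refine ⟨M, fun a ha => ?_⟩
    by_contra h
    push_neg at h
    have : {x | U x < a} = Set.univ := by
      ext x
      simp only [Set.mem_setOf_eq, Set.mem_univ, iff_true]
      exact lt_of_le_of_lt (le_trans (le_abs_self _) (hM x)) h
    rw [Set.mem_setOf_eq, this] at ha
    exact hlam (Measure.measure_univ_eq_zero.mp ha)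
  have hBpos : lam B ≠ 0 := by
    intro h
    have hsub : lam {x | U x < m + ε / 2} = 0 :=
      measure_mono_null (fun x (hx : U x < m + ε / 2) => show x ∈ B from le_of_lt hx) h
    have : m + ε / 2 ≤ m := by
      conv_rhs => rw [hm, essInf_eq_sSup]
      exact le_csSup hBdd hsub
    linarith
  -- integrability
  have hmeas : ∀ β : ℝ, Measurable fun x => Real.exp (-β * U x) :=
    fun β => (hU.const_mul (-β)).exp
  have hint : ∀ β : ℝ, Integrable (fun x => Real.exp (-β * U x)) lam := by
    intro β
    refine (integrable_const (Real.exp (|β| * M))).mono'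
      (hmeas β).aestronglyMeasurable (ae_of_all _ fun x => ?_)
    rw [Real.norm_eq_abs, abs_of_pos (Real.exp_pos _)]
    apply Real.exp_le_exp.mpr
    calc -β * U x ≤ |(-β) * U x| := le_abs_self _
      _ = |β| * |U x| := by rw [abs_mul, abs_neg]
      _ ≤ |β| * M := mul_le_mul_of_nonneg_left (hM x) (abs_nonneg _)
  -- denominator positive
  have hden : ∀ β : ℝ, 0 < ∫ x, Real.exp (-β * U x) ∂lam := by
    intro β
    rw [integral_pos_iff_support_of_nonneg (fun x => (Real.exp_pos _).le) (hint β)]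
    have : Function.support (fun x => Real.exp (-β * U x)) = Set.univ :=
      Set.eq_univ_of_forall fun x => (Real.exp_pos _).ne'
    rw [this]
    simpa [pos_iff_ne_zero] using fun h => hlam (Measure.measure_univ_eq_zero.mp h)
  -- the key decomposition: ratio = 1 - (∫_{Aᶜ})/(∫)
  have hsplit : ∀ β : ℝ,
      (∫ x in A, Real.exp (-β * U x) ∂lam) / (∫ x, Real.exp (-β * U x) ∂lam)
        = 1 - (∫ x in Aᶜ, Real.exp (-β * U x) ∂lam) / (∫ x, Real.exp (-β * U x) ∂lam) := by
    intro β
    have hadd := integral_add_compl hAmeas (hint β)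
    rw [eq_sub_iff_add_eq, ← add_div, hadd, div_self (hden β).ne']
  simp only [hsplit]
  have key : Tendsto
      (fun β : ℝ => (∫ x in Aᶜ, Real.exp (-β * U x) ∂lam) / ∫ x, Real.exp (-β * U x) ∂lam)
      atTop (nhds 0) := by
    set C : ℝ := (lam Set.univ).toReal / (lam B).toReal with hC
    have hBr : 0 < (lam B).toReal :=
      ENNReal.toReal_pos hBpos (measure_ne_top _ _)
    -- squeeze
    refine tendsto_of_tendsto_of_tendsto_of_le_of_le' (g := fun _ => (0:ℝ))
      (h := fun β : ℝ => C * Real.exp (-β * (ε / 2))) tendsto_const_nhds ?_ ?_ ?_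
    · have h1 : Tendsto (fun β : ℝ => -β * (ε / 2)) atTop atBot := by
        have := (tendsto_id (α := ℝ)).atTop_mul_const (show (0:ℝ) < ε / 2 by linarith)
        exact (tendsto_neg_atTop_atBot.comp this).congr fun x => by simp [neg_mul]
      have := (Real.tendsto_exp_atBot.comp h1).const_mul C
      simpa using this
    · filter_upwards with β
      exact div_nonneg (setIntegral_nonneg hAmeas.compl fun x _ => (Real.exp_pos _).le)
        (hden β).le
    · filter_upwards [eventually_ge_atTop (0:ℝ)] with β hβ
      have hnum : (∫ x in Aᶜ, Real.exp (-β * U x) ∂lam)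
          ≤ Real.exp (-β * (m + ε)) * (lam Set.univ).toReal := by
        calc (∫ x in Aᶜ, Real.exp (-β * U x) ∂lam)
            ≤ ∫ _ in Aᶜ, Real.exp (-β * (m + ε)) ∂lam := by
              refine setIntegral_mono_on ((hint β).integrableOn) (integrable_const _).integrableOn
                hAmeas.compl fun x hx => ?_
              have : m + ε ≤ U x := le_of_lt (by simpa [hA, not_le] using hx)
              exact Real.exp_le_exp.mpr (by nlinarith)
          _ = (lam Aᶜ).toReal * Real.exp (-β * (m + ε)) := by
              rw [setIntegral_const]; rw [smul_eq_mul]; rfl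
          _ ≤ Real.exp (-β * (m + ε)) * (lam Set.univ).toReal := by
              rw [mul_comm]
              exact mul_le_mul_of_nonneg_left
                (ENNReal.toReal_mono (measure_ne_top _ _) (measure_mono (Set.subset_univ _)))
                (Real.exp_pos _).le
      have hdenlb : Real.exp (-β * (m + ε / 2)) * (lam B).toReal
          ≤ ∫ x, Real.exp (-β * U x) ∂lam := by
        calc Real.exp (-β * (m + ε / 2)) * (lam B).toReal
            ≤ ∫ x in B, Real.exp (-β * U x) ∂lam := by
              refine setIntegral_ge_of_const_le_real hBmeas (measure_ne_top _ _)
                (fun x hx => Real.exp_le_exp.mpr ?_) (hint β).integrableOn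
              have : U x ≤ m + ε / 2 := hx
              nlinarith
          _ ≤ ∫ x, Real.exp (-β * U x) ∂lam :=
              setIntegral_le_integral (hint β) (ae_of_all _ fun x => (Real.exp_pos _).le)
      have hlbpos : 0 < Real.exp (-β * (m + ε / 2)) * (lam B).toReal :=
        mul_pos (Real.exp_pos _) hBr
      calc (∫ x in Aᶜ, Real.exp (-β * U x) ∂lam) / ∫ x, Real.exp (-β * U x) ∂lam
          ≤ (Real.exp (-β * (m + ε)) * (lam Set.univ).toReal)
              / (Real.exp (-β * (m + ε / 2)) * (lam B).toReal) := by
            apply div_le_div₀ (by positivity) hnum hlbpos hdenlb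
        _ = C * Real.exp (-β * (ε / 2)) := by
            rw [hC, show Real.exp (-β * (m + ε))
                = Real.exp (-β * (ε / 2)) * Real.exp (-β * (m + ε / 2)) by
              rw [← Real.exp_add]; congr 1; ring]
            field_simp
  have : Tendsto (fun β : ℝ =>
      1 - (∫ x in Aᶜ, Real.exp (-β * U x) ∂lam) / ∫ x, Real.exp (-β * U x) ∂lam)
      atTop (nhds (1 - 0)) := tendsto_const_nhds.sub key
  simpa using this
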